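/- The hypersymplectic moment map φ : ℂ² → ℝ × ℂ, φ(z,w) = (½(|z|² + |w|²), i·z·w̄), has image exactly the solid cone {(a,b) ∈ ℝ × ℂ : a ≥ |b|}, and the induced map on ℂ²/S¹ (for the action e^{iθ}·(z,w) = (e^{iθ}z, e^{iθ}w)) is two-to-one over the interior {a > |b|} and one-to-one over the boundary {a = |b|}. -/

import Mathlib

noncomputable def circleMk (u : ℂ) (h : ‖u‖ = 1) : Circle :=
  ⟨u, by simp [Submonoid.unitSphere, h]⟩

@[simp] lemma circleMk_coe (u : ℂ) (h : ‖u‖ = 1) :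
    ((circleMk u h : Circle) : ℂ) = u := rfl

lemma sq_inj {u v : ℝ} (hu : 0 ≤ u) (hv : 0 ≤ v) (h : u ^ 2 = v ^ 2) : u = v := by
  nlinarith [sq_nonneg (u - v), sq_nonneg (u + v)]

lemma key_orb (p q : ℂ × ℂ) (h1 : ‖p.1‖ = ‖q.1‖)
    (h2 : ‖p.2‖ = ‖q.2‖)
    (hb : p.1 * (starRingEnd ℂ) p.2 = q.1 * (starRingEnd ℂ) q.2) :
    ∃ u : Circle, ((u : ℂ) * p.1, (u : ℂ) * p.2) = q := by
  by_cases hp1 : p.1 = 0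
  · have hq1 : q.1 = 0 := by
      have := h1; rw [hp1, norm_zero] at this
      exact (norm_eq_zero.mp this.symm)
    by_cases hp2 : p.2 = 0
    · have hq2 : q.2 = 0 := by
        have := h2; rw [hp2, norm_zero] at this
        exact (norm_eq_zero.mp this.symm)
      exact ⟨1, Prod.ext (by simp [hp1, hq1]) (by simp [hp2, hq2])⟩
    · have hq2 : q.2 ≠ 0 := by
        intro h; rw [h, norm_zero] at h2; exact hp2 (norm_eq_zero.mp h2)
      refine ⟨circleMk (q.2 / p.2) ?_, ?_⟩
      · rw [norm_div, ← h2, div_self (by simpa using hp2)]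
      · exact Prod.ext (by simp [hp1, hq1]) (by simp [div_mul_cancel₀ _ hp2])
  · have hq1 : q.1 ≠ 0 := by
      intro h; rw [h, norm_zero] at h1; exact hp1 (norm_eq_zero.mp h1)
    by_cases hp2 : p.2 = 0
    · have hq2 : q.2 = 0 := by
        have := h2; rw [hp2, norm_zero] at this
        exact (norm_eq_zero.mp this.symm)
      refine ⟨circleMk (q.1 / p.1) ?_, ?_⟩
      · rw [norm_div, ← h1, div_self (by simpa using hp1)]
      · exact Prod.ext (by simp [div_mul_cancel₀ _ hp1]) (by simp [hp2, hq2])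
    · have hq2 : q.2 ≠ 0 := by
        intro h; rw [h, norm_zero] at h2; exact hp2 (norm_eq_zero.mp h2)
      have hN : (Complex.normSq p.2 : ℂ) = (Complex.normSq q.2 : ℂ) := by
        rw [← Complex.sq_norm, ← Complex.sq_norm, h2]
      have hNz : (Complex.normSq q.2 : ℂ) ≠ 0 :=
        Complex.ofReal_ne_zero.mpr (ne_of_gt (Complex.normSq_pos.mpr hq2))
      have hP := Complex.mul_conj p.2
      have hQ := Complex.mul_conj q.2
      have key : q.1 * p.2 = q.2 * p.1 := by
        apply mul_right_cancel₀ hNz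
        calc q.1 * p.2 * (Complex.normSq q.2 : ℂ)
            = (q.1 * (starRingEnd ℂ) q.2) * p.2 * q.2 := by rw [← hQ]; ring
          _ = (p.1 * (starRingEnd ℂ) p.2) * p.2 * q.2 := by rw [hb]
          _ = q.2 * p.1 * (Complex.normSq p.2 : ℂ) := by rw [← hP]; ring
          _ = q.2 * p.1 * (Complex.normSq q.2 : ℂ) := by rw [hN]
      refine ⟨circleMk (q.1 / p.1) ?_, ?_⟩
      · rw [norm_div, ← h1, div_self (by simpa using hp1)]
      · refine Prod.ext (by simp [div_mul_cancel₀ _ hp1]) ?_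
        simp only [circleMk_coe]
        field_simp
        linear_combination key

lemma phi_point1 (a t r : ℝ) (b : ℂ) (ht : t^2 = a^2 - ‖b‖^2)
    (hr : r^2 = a + t) (hrpos : 0 < r) :
    (1/2 : ℝ) * (‖(r : ℂ)‖ ^2 + ‖Complex.I * (starRingEnd ℂ) b / r‖ ^2) = a ∧
    Complex.I * (r : ℂ) * (starRingEnd ℂ) (Complex.I * (starRingEnd ℂ) b / r) = b ∧
    ‖(r : ℂ)‖ ^ 2 = a + t ∧
    ‖Complex.I * (starRingEnd ℂ) b / r‖ ^ 2 = a - t := by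
  have hrne : (r : ℂ) ≠ 0 := Complex.ofReal_ne_zero.mpr hrpos.ne'
  have h1 : ‖(r : ℂ)‖ ^ 2 = a + t := by
    rw [Complex.norm_real, Real.norm_eq_abs, abs_of_pos hrpos]; exact hr
  have hb2 : ‖b‖ ^ 2 = (a + t) * (a - t) := by nlinarith
  have hat : a + t > 0 := by rw [← hr]; positivity
  have h2 : ‖Complex.I * (starRingEnd ℂ) b / r‖ ^ 2 = a - t := by
    rw [norm_div, norm_mul, Complex.norm_I, Complex.norm_conj, Complex.norm_real, Real.norm_eq_abs,
      abs_of_pos hrpos, one_mul, div_pow, hr, hb2]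
    field_simp
  refine ⟨by rw [h1, h2]; ring, ?_, h1, h2⟩
  rw [map_div₀, map_mul, Complex.conj_conj, Complex.conj_I, Complex.conj_ofReal]
  field_simp
  linear_combination (-b) * Complex.I_sq

lemma phi_point2 (a t r : ℝ) (b : ℂ) (ht : t^2 = a^2 - ‖b‖^2)
    (hr : r^2 = a + t) (hrpos : 0 < r) :
    (1/2 : ℝ) * (‖-Complex.I * b / r‖ ^2 + ‖(r : ℂ)‖ ^2) = a ∧
    Complex.I * (-Complex.I * b / r) * (starRingEnd ℂ) ((r : ℂ)) = b ∧
    ‖-Complex.I * b / r‖ ^ 2 = a - t ∧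
    ‖(r : ℂ)‖ ^ 2 = a + t := by
  have hrne : (r : ℂ) ≠ 0 := Complex.ofReal_ne_zero.mpr hrpos.ne'
  have h1 : ‖(r : ℂ)‖ ^ 2 = a + t := by
    rw [Complex.norm_real, Real.norm_eq_abs, abs_of_pos hrpos]; exact hr
  have hb2 : ‖b‖ ^ 2 = (a + t) * (a - t) := by nlinarith
  have hat : a + t > 0 := by rw [← hr]; positivity
  have h2 : ‖-Complex.I * b / r‖ ^ 2 = a - t := by
    rw [norm_div, norm_mul, norm_neg, Complex.norm_I, Complex.norm_real, Real.norm_eq_abs,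
      abs_of_pos hrpos, one_mul, div_pow, hr, hb2]
    field_simp
  refine ⟨by rw [h1, h2]; ring, ?_, h2, h1⟩
  rw [Complex.conj_ofReal]
  field_simp
  linear_combination (-b) * Complex.I_sq

/-- The hypersymplectic moment map `φ(z,w) = (½(|z|² + |w|²), i·z·w̄)` on ℂ²
has image exactly the solid cone `{(a,b) ∈ ℝ × ℂ : a ≥ |b|}`; for the diagonal
circle action `u·(z,w) = (uz, uw)` the induced map on `ℂ²/S¹` is two-to-one
over the interior `{a > |b|}` (each fibre is exactly two circle orbits) and
one-to-one over the boundary `{a = |b|}` (each fibre is a single orbit). -/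
theorem stmt_18
    (φ : ℂ × ℂ → ℝ × ℂ)
    (hφ : φ = fun p => ((1 / 2 : ℝ) * (‖p.1‖ ^ 2 + ‖p.2‖ ^ 2),
      Complex.I * p.1 * (starRingEnd ℂ p.2)))
    (orb : ℂ × ℂ → ℂ × ℂ → Prop)
    (horb : orb = fun p q => ∃ u : Circle, ((u : ℂ) * p.1, (u : ℂ) * p.2) = q) :
    (Set.range φ = {c : ℝ × ℂ | ‖c.2‖ ≤ c.1}) ∧
    (∀ c : ℝ × ℂ, ‖c.2‖ < c.1 →
      ∃ p q : ℂ × ℂ, φ p = c ∧ φ q = c ∧ ¬ orb p q ∧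
        ∀ r : ℂ × ℂ, φ r = c → orb p r ∨ orb q r) ∧
    (∀ c : ℝ × ℂ, ‖c.2‖ = c.1 →
      ∀ p q : ℂ × ℂ, φ p = c → φ q = c → orb p q) := by
  subst hφ horb
  refine ⟨?_, ?_, ?_⟩
  · -- range
    ext c
    obtain ⟨a, b⟩ := c
    simp only [Set.mem_range, Set.mem_setOf_eq]
    constructor
    · rintro ⟨⟨z, w⟩, hp⟩
      simp only [Prod.mk.injEq] at hp
      obtain ⟨h1, h2⟩ := hp
      subst h1; subst h2
      have habs : ‖Complex.I * z * (starRingEnd ℂ) w‖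
          = ‖z‖ * ‖w‖ := by
        rw [norm_mul, norm_mul, Complex.norm_I, Complex.norm_conj, one_mul]
      simp only [habs]
      nlinarith [sq_nonneg (‖z‖ - ‖w‖)]
    · intro hba
      by_cases ha : a = 0
      · have hb0 : ‖b‖ = 0 :=
          le_antisymm (ha ▸ hba) (norm_nonneg b)
        have hb : b = 0 := norm_eq_zero.mp hb0
        exact ⟨(0, 0), by simp [ha, hb, Prod.ext_iff]⟩
      · have ha' : 0 < a :=
          lt_of_le_of_ne (le_trans (norm_nonneg b) hba) (Ne.symm ha)
        have hd : 0 ≤ a^2 - ‖b‖^2 := by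
          nlinarith [norm_nonneg b]
        set t := Real.sqrt (a^2 - ‖b‖^2) with htdef
        have ht2 : t^2 = a^2 - ‖b‖^2 := Real.sq_sqrt hd
        have ht0 : 0 ≤ t := Real.sqrt_nonneg _
        have hat : 0 < a + t := by linarith
        set r := Real.sqrt (a + t) with hrdef
        have hr2 : r^2 = a + t := Real.sq_sqrt hat.le
        have hrpos : 0 < r := Real.sqrt_pos.mpr hat
        obtain ⟨e1, e2, _, _⟩ := phi_point1 a t r b ht2 hr2 hrpos
        exact ⟨((r : ℂ), Complex.I * (starRingEnd ℂ) b / r),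
          by simp only [Prod.mk.injEq]; exact ⟨e1, e2⟩⟩
  · -- interior: two-to-one
    rintro ⟨a, b⟩ hlt
    simp only at hlt
    have ha' : 0 < a := lt_of_le_of_lt (norm_nonneg b) hlt
    have hd : 0 < a^2 - ‖b‖^2 := by
      nlinarith [norm_nonneg b]
    set t := Real.sqrt (a^2 - ‖b‖^2) with htdef
    have ht2 : t^2 = a^2 - ‖b‖^2 := Real.sq_sqrt hd.le
    have htpos : 0 < t := Real.sqrt_pos.mpr hd
    have hat : 0 < a + t := by linarith
    set r := Real.sqrt (a + t) with hrdef
    have hr2 : r^2 = a + t := Real.sq_sqrt hat.le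
    have hrpos : 0 < r := Real.sqrt_pos.mpr hat
    obtain ⟨e1, e2, e3, e4⟩ := phi_point1 a t r b ht2 hr2 hrpos
    obtain ⟨f1, f2, f3, f4⟩ := phi_point2 a t r b ht2 hr2 hrpos
    refine ⟨((r : ℂ), Complex.I * (starRingEnd ℂ) b / r),
      (-Complex.I * b / r, (r : ℂ)), ?_, ?_, ?_, ?_⟩
    · simp only [Prod.mk.injEq]; exact ⟨e1, e2⟩
    · simp only [Prod.mk.injEq]; exact ⟨f1, f2⟩
    · rintro ⟨u, hu⟩
      simp only [Prod.mk.injEq] at hu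
      have habs := congrArg (‖·‖) hu.1
      rw [norm_mul, Circle.norm_coe, one_mul] at habs
      have : a + t = a - t := by
        rw [← e3, ← f3, habs]
      linarith
    · rintro ⟨z, w⟩ hzw
      simp only [Prod.mk.injEq] at hzw
      obtain ⟨g1, g2⟩ := hzw
      have hxy : ‖z‖ * ‖w‖ = ‖b‖ := by
        rw [← g2, norm_mul, norm_mul, Complex.norm_I, Complex.norm_conj, one_mul]
      have hsum : ‖z‖ ^ 2 + ‖w‖ ^ 2 = 2 * a := by linarith
      have hquad : (‖z‖ ^ 2 - (a + t)) * (‖z‖ ^ 2 - (a - t)) = 0 := by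
        linear_combination (‖z‖ ^ 2) * hsum
          + (-(‖b‖ + ‖z‖ * ‖w‖)) * hxy + (-1 : ℝ) * ht2
      have hbcomp : ∀ z' w' : ℂ, Complex.I * z' * (starRingEnd ℂ) w' = b →
          z' * (starRingEnd ℂ) w' = z * (starRingEnd ℂ) w := by
        intro z' w' h
        apply mul_left_cancel₀ Complex.I_ne_zero
        rw [← mul_assoc, ← mul_assoc, h, g2]
      rcases mul_eq_zero.mp hquad with hx | hx
      · left
        have hxz : ‖z‖ ^ 2 = a + t := by linarith
        have hyw : ‖w‖ ^ 2 = a - t := by linarith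
        exact key_orb _ (z, w)
          (sq_inj (norm_nonneg _) (norm_nonneg _) (by rw [e3, hxz]))
          (sq_inj (norm_nonneg _) (norm_nonneg _) (by rw [e4, hyw]))
          (hbcomp _ _ e2)
      · right
        have hxz : ‖z‖ ^ 2 = a - t := by linarith
        have hyw : ‖w‖ ^ 2 = a + t := by linarith
        exact key_orb _ (z, w)
          (sq_inj (norm_nonneg _) (norm_nonneg _) (by rw [f3, hxz]))
          (sq_inj (norm_nonneg _) (norm_nonneg _) (by rw [f4, hyw]))
          (hbcomp _ _ f2)
  · -- boundary: one-to-one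
    rintro ⟨a, b⟩ heq p q hp hq
    simp only [Prod.mk.injEq] at hp hq
    simp only at heq
    obtain ⟨hp1, hp2⟩ := hp
    obtain ⟨hq1, hq2⟩ := hq
    have habs : ∀ z w : ℂ,
        (1/2 : ℝ) * (‖z‖ ^ 2 + ‖w‖ ^ 2) = a →
        Complex.I * z * (starRingEnd ℂ) w = b →
        ‖z‖ ^ 2 = a ∧ ‖w‖ ^ 2 = a := by
      intro z w h1 h2
      have hxy : ‖z‖ * ‖w‖ = a := by
        rw [← heq, ← h2, norm_mul, norm_mul, Complex.norm_I, Complex.norm_conj, one_mul]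
      have hzw : ‖z‖ = ‖w‖ := by
        nlinarith [sq_nonneg (‖z‖ - ‖w‖)]
      constructor <;> nlinarith
    obtain ⟨hpa, hpb⟩ := habs _ _ hp1 hp2
    obtain ⟨hqa, hqb⟩ := habs _ _ hq1 hq2
    have hbcomp : p.1 * (starRingEnd ℂ) p.2 = q.1 * (starRingEnd ℂ) q.2 := by
      apply mul_left_cancel₀ Complex.I_ne_zero
      rw [← mul_assoc, ← mul_assoc, hp2, hq2]
    exact key_orb p q
      (sq_inj (norm_nonneg _) (norm_nonneg _) (by rw [hpa, hqa]))
      (sq_inj (norm_nonneg _) (norm_nonneg _) (by rw [hpb, hqb]))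
      hbcomp
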